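/- For each fixed natural number m ≥ 1 there exists a constant C_m > 0 such that for every natural number n ≥ 1, all reals p, q with 0 < q < p ≤ 1, and every x ∈ [0,1]: |B_{n,p,q}((t−x)^m_{p,q}; x)| ≤ C_m · x(1−x)/[n]_{p,q}^{⌊(m+1)/2⌋}. -/

import Mathlib

open Finset Set

/-- The `(p,q)`-integer `[k]_{p,q} = (p^k - q^k)/(p - q)` (so `[0]_{p,q} = 0`). -/
noncomputable def pqInt (p q : ℝ) (k : ℕ) : ℝ := (p ^ k - q ^ k) / (p - q)

/-- The `(p,q)`-factorial `[k]_{p,q}! = ∏_{j=1}^k [j]_{p,q}` (`[0]_{p,q}! = 1`). -/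
noncomputable def pqFact (p q : ℝ) (k : ℕ) : ℝ := ∏ j ∈ Finset.range k, pqInt p q (j + 1)

/-- The `(p,q)`-binomial coefficient. -/
noncomputable def pqBinom (p q : ℝ) (n k : ℕ) : ℝ :=
  pqFact p q n / (pqFact p q k * pqFact p q (n - k))

/-- The `(p,q)`-Bernstein basis function
`P_{n,k}(p,q;x) = p^{k(k-1)/2} [n choose k]_{p,q} x^k ∏_{s=0}^{n-k-1} (p^s - q^s x)`. -/
noncomputable def pqBern (p q : ℝ) (n k : ℕ) (x : ℝ) : ℝ :=
  p ^ (k * (k - 1) / 2) * pqBinom p q n k * x ^ k *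
    ∏ s ∈ Finset.range (n - k), (p ^ s - q ^ s * x)

/-- The node `x_{n,k} = p^{n-k} [k]_{p,q} / [n]_{p,q}`. -/
noncomputable def pqNode (p q : ℝ) (n k : ℕ) : ℝ := p ^ (n - k) * pqInt p q k / pqInt p q n

/-- The `(p,q)`-power central moment
`B_{n,p,q}((t-a)^m_{p,q}; y) = p^{-n(n-1)/2} ∑_{k=0}^n (∏_{s=0}^{m-1}(p^s x_{n,k} - q^s a)) P_{n,k}(p,q;y)`. -/
noncomputable def pqPowMoment (p q : ℝ) (n m : ℕ) (a y : ℝ) : ℝ :=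
  (p ^ (n * (n - 1) / 2))⁻¹ *
    ∑ k ∈ Finset.range (n + 1),
      (∏ s ∈ Finset.range m, (p ^ s * pqNode p q n k - q ^ s * a)) * pqBern p q n k y

/-- The `m`-th absolute central moment
`B_{n,p,q}(|t-x|^m; x) = p^{-n(n-1)/2} ∑_{k=0}^n |x_{n,k} - x|^m P_{n,k}(p,q;x)`. -/
noncomputable def pqAbsMoment (p q : ℝ) (n m : ℕ) (x : ℝ) : ℝ :=
  (p ^ (n * (n - 1) / 2))⁻¹ *
    ∑ k ∈ Finset.range (n + 1), |pqNode p q n k - x| ^ m * pqBern p q n k x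

/-- The ordinary `m`-th central moment
`B_{n,p,q}((t-x)^m; x) = p^{-n(n-1)/2} ∑_{k=0}^n (x_{n,k} - x)^m P_{n,k}(p,q;x)`. -/
noncomputable def pqMoment (p q : ℝ) (n m : ℕ) (x : ℝ) : ℝ :=
  (p ^ (n * (n - 1) / 2))⁻¹ *
    ∑ k ∈ Finset.range (n + 1), (pqNode p q n k - x) ^ m * pqBern p q n k x

/-- The `(p,q)`-Bernstein operator `B_{n,p,q}(f;x)`. -/
noncomputable def pqBernstein (p q : ℝ) (n : ℕ) (f : ℝ → ℝ) (x : ℝ) : ℝ :=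
  (p ^ (n * (n - 1) / 2))⁻¹ *
    ∑ k ∈ Finset.range (n + 1), f (pqNode p q n k) * pqBern p q n k x

/-- The `r`-th order generalization `B^{[r]}_{n,p,q}(f;x)` where `f^{(i)}` is interpreted as
`iteratedDerivWithin i f (Set.Icc 0 1)`. -/
noncomputable def pqBernsteinR (p q : ℝ) (n r : ℕ) (f : ℝ → ℝ) (x : ℝ) : ℝ :=
  (p ^ (n * (n - 1) / 2))⁻¹ *
    ∑ k ∈ Finset.range (n + 1), pqBern p q n k x *
      ∑ i ∈ Finset.range (r + 1),
        iteratedDerivWithin i f (Set.Icc 0 1) (pqNode p q n k) / (i.factorial : ℝ) *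
          (x - pqNode p q n k) ^ i

/-- The modulus of continuity on `[0,1]`:
`ω(g; δ) = sup { |g u - g v| : u, v ∈ [0,1], |u - v| ≤ δ }`. -/
noncomputable def modulusOfContinuity (g : ℝ → ℝ) (δ : ℝ) : ℝ :=
  sSup {d : ℝ | ∃ u ∈ Set.Icc (0 : ℝ) 1, ∃ v ∈ Set.Icc (0 : ℝ) 1, |u - v| ≤ δ ∧ d = |g u - g v|}
section QLemmas
variable {q : ℝ}

lemma pqInt_one_eq (hq1 : q ≠ 1) (k : ℕ) : pqInt 1 q k = ∑ i ∈ Finset.range k, q ^ i := by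
  rw [pqInt, geom_sum_eq hq1 k, one_pow]
  have h : q - 1 ≠ 0 := sub_ne_zero.2 hq1
  rw [div_eq_div_iff (by rw [sub_ne_zero]; intro hh; exact hq1 hh.symm) h]
  ring

lemma one_sub_mul_pqInt (hq1 : q ≠ 1) (k : ℕ) : (1 - q) * pqInt 1 q k = 1 - q ^ k := by
  rw [pqInt, one_pow]
  have h : (1:ℝ) - q ≠ 0 := sub_ne_zero.2 (by intro h; exact hq1 h.symm)
  field_simp

lemma pqInt_one_nonneg (hq0 : 0 ≤ q) (hq1 : q < 1) (k : ℕ) : 0 ≤ pqInt 1 q k := by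
  rw [pqInt_one_eq hq1.ne k]
  exact Finset.sum_nonneg fun i _ => pow_nonneg hq0 i

lemma pqInt_one_ge_one (hq0 : 0 ≤ q) (hq1 : q < 1) {k : ℕ} (hk : 1 ≤ k) :
    1 ≤ pqInt 1 q k := by
  rw [pqInt_one_eq hq1.ne k]
  calc (1:ℝ) = ∑ i ∈ Finset.range 1, q ^ i := by simp
  _ ≤ _ := Finset.sum_le_sum_of_subset_of_nonneg
      (Finset.range_subset_range.2 hk) (fun i _ _ => pow_nonneg hq0 i)

lemma pqInt_one_pos (hq0 : 0 ≤ q) (hq1 : q < 1) {k : ℕ} (hk : 1 ≤ k) : 0 < pqInt 1 q k :=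
  lt_of_lt_of_le one_pos (pqInt_one_ge_one hq0 hq1 hk)

lemma pqInt_one_le (hq0 : 0 ≤ q) (hq1 : q ≤ 1) (k : ℕ) : pqInt 1 q k ≤ k := by
  rcases eq_or_lt_of_le hq1 with h | h
  · rw [pqInt, ← h]; simp
  · rw [pqInt_one_eq h.ne k]
    calc ∑ i ∈ Finset.range k, q ^ i ≤ ∑ i ∈ Finset.range k, 1 :=
      Finset.sum_le_sum fun i _ => pow_le_one₀ hq0 hq1
    _ = k := by simp

lemma pqInt_one_add (hq1 : q ≠ 1) (a b : ℕ) :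
    pqInt 1 q (a + b) = pqInt 1 q a + q ^ a * pqInt 1 q b := by
  rw [pqInt, pqInt, pqInt]
  simp only [one_pow]
  field_simp
  ring

lemma pqFact_succ (p q : ℝ) (k : ℕ) :
    pqFact p q (k + 1) = pqFact p q k * pqInt p q (k + 1) := by
  rw [pqFact, pqFact, Finset.prod_range_succ]

lemma pqFact_one_pos (hq0 : 0 ≤ q) (hq1 : q < 1) (k : ℕ) : 0 < pqFact 1 q k := by
  rw [pqFact]
  exact Finset.prod_pos fun j _ => pqInt_one_pos hq0 hq1 (Nat.succ_le_succ (Nat.zero_le j))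

lemma pqFact_zero (p q : ℝ) : pqFact p q 0 = 1 := by simp [pqFact]

lemma pqBinom_zero' (hq0 : 0 ≤ q) (hq1 : q < 1) (n : ℕ) : pqBinom 1 q n 0 = 1 := by
  rw [pqBinom, pqFact_zero, Nat.sub_zero, one_mul]
  exact div_self (pqFact_one_pos hq0 hq1 n).ne'

lemma pqBinom_self (hq0 : 0 ≤ q) (hq1 : q < 1) (n : ℕ) : pqBinom 1 q n n = 1 := by
  rw [pqBinom, Nat.sub_self, pqFact_zero, mul_one]
  exact div_self (pqFact_one_pos hq0 hq1 n).ne'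

lemma pqBinom_pascal (hq0 : 0 ≤ q) (hq1 : q < 1) (a b : ℕ) :
    pqBinom 1 q (a + b + 2) (a + 1)
      = pqBinom 1 q (a + b + 1) (a + 1) + q ^ (b + 1) * pqBinom 1 q (a + b + 1) a := by
  have h1 : a + b + 2 - (a + 1) = b + 1 := by omega
  have h2 : a + b + 1 - (a + 1) = b := by omega
  have h3 : a + b + 1 - a = b + 1 := by omega
  rw [pqBinom, pqBinom, pqBinom, h1, h2, h3]
  have e1 : a + b + 2 = (a + b + 1) + 1 := by ring
  rw [e1, pqFact_succ]
  have e2 : pqFact 1 q (a+1) = pqFact 1 q a * pqInt 1 q (a+1) := pqFact_succ 1 q a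
  have e3 : pqFact 1 q (b+1) = pqFact 1 q b * pqInt 1 q (b+1) := pqFact_succ 1 q b
  rw [e2, e3]
  have hfa := (pqFact_one_pos hq0 hq1 a).ne'
  have hfb := (pqFact_one_pos hq0 hq1 b).ne'
  have hia := (pqInt_one_pos hq0 hq1 (Nat.succ_le_succ (Nat.zero_le a))).ne'
  have hib := (pqInt_one_pos hq0 hq1 (Nat.succ_le_succ (Nat.zero_le b))).ne'
  have key : pqInt 1 q (a + b + 1 + 1) = pqInt 1 q (b+1) + q ^ (b+1) * pqInt 1 q (a+1) := by
    have : a + b + 1 + 1 = (b + 1) + (a + 1) := by ring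
    rw [this, pqInt_one_add hq1.ne]
  rw [key]
  field_simp

lemma pqInt_mul_pqBinom (hq0 : 0 ≤ q) (hq1 : q < 1) {n k : ℕ} (hk : 1 ≤ k) (hkn : k ≤ n) :
    pqInt 1 q k * pqBinom 1 q n k = pqInt 1 q n * pqBinom 1 q (n-1) (k-1) := by
  obtain ⟨k', rfl⟩ : ∃ k', k = k' + 1 := ⟨k - 1, by omega⟩
  obtain ⟨n', rfl⟩ : ∃ n', n = n' + 1 := ⟨n - 1, by omega⟩
  simp only [Nat.add_sub_cancel]
  rw [pqBinom, pqBinom, pqFact_succ 1 q n', pqFact_succ 1 q k']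
  have h1 : n' + 1 - (k' + 1) = n' - k' := by omega
  rw [h1]
  have hfa := (pqFact_one_pos hq0 hq1 k').ne'
  have hfb := (pqFact_one_pos hq0 hq1 (n'-k')).ne'
  have hia := (pqInt_one_pos hq0 hq1 (Nat.succ_le_succ (Nat.zero_le k'))).ne'
  field_simp

end QLemmas
section QBern
variable {q : ℝ}

/-- Normalized q-Bernstein basis. -/
noncomputable def qW (q : ℝ) (n k : ℕ) (x : ℝ) : ℝ :=
  pqBinom 1 q n k * x ^ k * ∏ s ∈ Finset.range (n - k), (1 - q ^ s * x)

lemma pqBern_one_eq (n k : ℕ) (x : ℝ) : pqBern 1 q n k x = qW q n k x := by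
  simp only [pqBern, qW, one_pow, one_mul]

lemma qW_partition (hq0 : 0 ≤ q) (hq1 : q < 1) :
    ∀ n : ℕ, ∀ x : ℝ, ∑ k ∈ Finset.range (n + 1), qW q n k x = 1 := by
  intro n
  induction n with
  | zero => intro x; simp [qW, pqBinom_zero' hq0 hq1]
  | succ n ih =>
    intro x
    have peel : ∑ k ∈ Finset.range (n + 2), qW q (n+1) k x
        = (qW q (n+1) 0 x + ∑ k ∈ Finset.range n, qW q (n+1) (k+1) x) + qW q (n+1) (n+1) x := by
      rw [Finset.sum_range_succ]
      congr 1
      rw [Finset.sum_range_succ']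
      ring
    rw [peel]
    have top : qW q (n+1) (n+1) x = x^(n+1) := by
      rw [qW, pqBinom_self hq0 hq1, Nat.sub_self]
      simp
    -- Pascal split of middle terms
    have mid : ∀ k ∈ Finset.range n, qW q (n+1) (k+1) x
        = pqBinom 1 q n (k+1) * x^(k+1) * ∏ s ∈ Finset.range (n - k), (1 - q^s*x)
          + q^(n-k) * pqBinom 1 q n k * x^(k+1) * ∏ s ∈ Finset.range (n - k), (1 - q^s*x) := by
      intro k hk
      rw [Finset.mem_range] at hk
      have hd : n + 1 - (k + 1) = n - k := by omega
      have pas : pqBinom 1 q (n+1) (k+1)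
          = pqBinom 1 q n (k+1) + q ^ (n - k) * pqBinom 1 q n k := by
        have h := pqBinom_pascal hq0 hq1 k (n - k - 1)
        have e1 : k + (n - k - 1) + 2 = n + 1 := by omega
        have e2 : k + (n - k - 1) + 1 = n := by omega
        have e3 : n - k - 1 + 1 = n - k := by omega
        rw [e1, e2, e3] at h
        exact h
      rw [qW, hd, pas]
      ring
    rw [Finset.sum_congr rfl mid, Finset.sum_add_distrib]
    -- first part: shift index
    have hG : qW q (n+1) 0 x + ∑ k ∈ Finset.range n,
        (pqBinom 1 q n (k+1) * x^(k+1) * ∏ s ∈ Finset.range (n - k), (1 - q^s*x))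
        = ∑ k ∈ Finset.range (n+1),
            (pqBinom 1 q n k * x^k * ∏ s ∈ Finset.range (n + 1 - k), (1 - q^s*x)) := by
      rw [Finset.sum_range_succ'
        (fun k => pqBinom 1 q n k * x^k * ∏ s ∈ Finset.range (n + 1 - k), (1 - q^s*x)) n]
      have e : ∀ k ∈ Finset.range n,
          pqBinom 1 q n (k+1) * x^(k+1) * ∏ s ∈ Finset.range (n - k), (1 - q^s*x)
          = pqBinom 1 q n (k+1) * x^(k+1) * ∏ s ∈ Finset.range (n + 1 - (k+1)), (1 - q^s*x) := by
        intro k hk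
        rw [Finset.mem_range] at hk
        have hd : n + 1 - (k + 1) = n - k := by omega
        rw [hd]
      rw [Finset.sum_congr rfl e]
      have h0 : qW q (n+1) 0 x
          = pqBinom 1 q n 0 * x^0 * ∏ s ∈ Finset.range (n + 1 - 0), (1 - q^s*x) := by
        rw [qW, pqBinom_zero' hq0 hq1, pqBinom_zero' hq0 hq1]
      rw [h0]
      ring
    -- second part: append top term
    have hB : (∑ k ∈ Finset.range n,
        q^(n-k) * pqBinom 1 q n k * x^(k+1) * ∏ s ∈ Finset.range (n - k), (1 - q^s*x)) + x^(n+1)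
        = ∑ k ∈ Finset.range (n+1),
            q^(n-k) * pqBinom 1 q n k * x^(k+1) * ∏ s ∈ Finset.range (n - k), (1 - q^s*x) := by
      rw [Finset.sum_range_succ, Nat.sub_self, pqBinom_self hq0 hq1]
      norm_num
    have assemble : qW q (n+1) 0 x + (∑ k ∈ Finset.range n,
          (pqBinom 1 q n (k+1) * x^(k+1) * ∏ s ∈ Finset.range (n - k), (1 - q^s*x))
        + ∑ k ∈ Finset.range n,
          q^(n-k) * pqBinom 1 q n k * x^(k+1) * ∏ s ∈ Finset.range (n - k), (1 - q^s*x)) + x^(n+1)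
        = (∑ k ∈ Finset.range (n+1),
            (pqBinom 1 q n k * x^k * ∏ s ∈ Finset.range (n + 1 - k), (1 - q^s*x)))
          + ∑ k ∈ Finset.range (n+1),
            q^(n-k) * pqBinom 1 q n k * x^(k+1) * ∏ s ∈ Finset.range (n - k), (1 - q^s*x) := by
      rw [← hG, ← hB]; ring
    rw [top, assemble, ← Finset.sum_add_distrib]
    have final : ∑ k ∈ Finset.range (n+1),
        (pqBinom 1 q n k * x^k * ∏ s ∈ Finset.range (n + 1 - k), (1 - q^s*x)
          + q^(n-k) * pqBinom 1 q n k * x^(k+1) * ∏ s ∈ Finset.range (n - k), (1 - q^s*x))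
        = ∑ k ∈ Finset.range (n+1), qW q n k x := by
      refine Finset.sum_congr rfl fun k hk => ?_
      rw [Finset.mem_range] at hk
      have hd : n + 1 - k = (n - k) + 1 := by omega
      rw [hd, Finset.prod_range_succ, qW]
      ring
    rw [final]
    exact ih x

lemma qW_linear (hq0 : 0 ≤ q) (hq1 : q < 1) (n : ℕ) (hn : 1 ≤ n) (x : ℝ) :
    ∑ k ∈ Finset.range (n + 1), pqNode 1 q n k * qW q n k x = x := by
  obtain ⟨n', rfl⟩ : ∃ n', n = n' + 1 := ⟨n - 1, by omega⟩
  rw [Finset.sum_range_succ']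
  have h0 : pqNode 1 q (n'+1) 0 * qW q (n'+1) 0 x = 0 := by
    rw [pqNode, pqInt]
    norm_num
  rw [h0, add_zero]
  have hnpos := (pqInt_one_pos hq0 hq1 (Nat.succ_le_succ (Nat.zero_le n'))).ne'
  have term : ∀ k ∈ Finset.range (n'+1), pqNode 1 q (n'+1) (k+1) * qW q (n'+1) (k+1) x
      = x * qW q n' k x := by
    intro k hk
    rw [Finset.mem_range] at hk
    rw [pqNode, qW, qW, one_pow, one_mul]
    have hd : n' + 1 - (k + 1) = n' - k := by omega
    rw [hd]
    have key := pqInt_mul_pqBinom hq0 hq1 (Nat.succ_le_succ (Nat.zero_le k))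
      (by omega : k + 1 ≤ n' + 1)
    simp only [Nat.add_sub_cancel, Nat.succ_sub_one] at key
    have : pqInt 1 q (k+1) / pqInt 1 q (n'+1) * pqBinom 1 q (n'+1) (k+1)
        = pqBinom 1 q n' k := by
      rw [div_mul_eq_mul_div, key]
      field_simp
    calc pqInt 1 q (k+1) / pqInt 1 q (n'+1)
          * (pqBinom 1 q (n'+1) (k+1) * x^(k+1) * ∏ s ∈ Finset.range (n'-k), (1 - q^s*x))
        = (pqInt 1 q (k+1) / pqInt 1 q (n'+1) * pqBinom 1 q (n'+1) (k+1))
          * x^(k+1) * ∏ s ∈ Finset.range (n'-k), (1 - q^s*x) := by ring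
      _ = pqBinom 1 q n' k * x^(k+1) * ∏ s ∈ Finset.range (n'-k), (1 - q^s*x) := by rw [this]
      _ = x * (pqBinom 1 q n' k * x^k * ∏ s ∈ Finset.range (n'-k), (1 - q^s*x)) := by ring
  rw [Finset.sum_congr rfl term, ← Finset.mul_sum, qW_partition hq0 hq1 n' x, mul_one]

lemma qW_ladder (hq0 : 0 ≤ q) (hq1 : q < 1) {n k : ℕ} (hkn : k ≤ n) (x : ℝ) :
    (1 - x) * (qW q n k x - qW q n k (q*x))
      = (1 - q) * (pqInt 1 q k - pqInt 1 q n * x) * qW q n k x := by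
  have hqx : qW q n k (q*x) = pqBinom 1 q n k * (q^k * x^k)
      * ∏ s ∈ Finset.range (n-k), (1 - q^(s+1)*x) := by
    rw [qW, mul_pow]
    congr 1
    apply Finset.prod_congr rfl
    intro s _
    rw [pow_succ]
    ring
  have key : (1 - x) * ∏ s ∈ Finset.range (n-k), (1 - q^(s+1)*x)
      = (∏ s ∈ Finset.range (n-k), (1 - q^s*x)) * (1 - q^(n-k)*x) := by
    have l1 : ∏ s ∈ Finset.range (n-k+1), (1 - q^s*x)
        = (∏ s ∈ Finset.range (n-k), (1 - q^(s+1)*x)) * (1 - q^0*x) :=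
      Finset.prod_range_succ' _ _
    have l2 : ∏ s ∈ Finset.range (n-k+1), (1 - q^s*x)
        = (∏ s ∈ Finset.range (n-k), (1 - q^s*x)) * (1 - q^(n-k)*x) :=
      Finset.prod_range_succ _ _
    rw [← l2, l1, pow_zero]
    ring
  have lqx : (1 - x) * qW q n k (q*x) = q^k * (1 - q^(n-k)*x) * qW q n k x := by
    rw [hqx, qW]
    calc (1-x) * (pqBinom 1 q n k * (q^k * x^k) * ∏ s ∈ Finset.range (n-k), (1 - q^(s+1)*x))
        = pqBinom 1 q n k * (q^k * x^k)
          * ((1-x) * ∏ s ∈ Finset.range (n-k), (1 - q^(s+1)*x)) := by ring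
      _ = pqBinom 1 q n k * (q^k * x^k)
          * ((∏ s ∈ Finset.range (n-k), (1 - q^s*x)) * (1 - q^(n-k)*x)) := by rw [key]
      _ = q^k * (1 - q^(n-k)*x) * (pqBinom 1 q n k * x^k * ∏ s ∈ Finset.range (n-k), (1-q^s*x)) := by
          ring
  have scal : (1 - x) - q^k * (1 - q^(n-k)*x)
      = (1-q) * (pqInt 1 q k - pqInt 1 q n * x) := by
    have e1 := one_sub_mul_pqInt hq1.ne (k := k)
    have e2 := one_sub_mul_pqInt hq1.ne (k := n)
    have e3 : q^k * q^(n-k) = q^n := by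
      rw [← pow_add, Nat.add_sub_cancel' hkn]
    linear_combination (-1 : ℝ) * e1 + x * e2 + x * e3
  calc (1 - x) * (qW q n k x - qW q n k (q*x))
      = (1-x) * qW q n k x - (1-x) * qW q n k (q*x) := by ring
    _ = (1-x) * qW q n k x - q^k * (1 - q^(n-k)*x) * qW q n k x := by rw [lqx]
    _ = ((1 - x) - q^k * (1 - q^(n-k)*x)) * qW q n k x := by ring
    _ = (1-q) * (pqInt 1 q k - pqInt 1 q n * x) * qW q n k x := by rw [scal]

/-- The central object: `S_m(x) = ∑_k ∏_{s<m}(x_k - q^s x) W_k(x)`. -/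
noncomputable def qS (q : ℝ) (n m : ℕ) (x : ℝ) : ℝ :=
  ∑ k ∈ Finset.range (n + 1),
    (∏ s ∈ Finset.range m, (pqNode 1 q n k - q ^ s * x)) * qW q n k x

/-- Shifted moment. -/
noncomputable def qT (q : ℝ) (n m : ℕ) (x : ℝ) : ℝ :=
  ∑ k ∈ Finset.range (n + 1),
    (∏ s ∈ Finset.range m, (pqNode 1 q n k - q ^ (s+1) * x)) * qW q n k x

lemma qS_zero (hq0 : 0 ≤ q) (hq1 : q < 1) (n : ℕ) (x : ℝ) : qS q n 0 x = 1 := by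
  rw [qS]
  simp only [Finset.range_zero, Finset.prod_empty, one_mul]
  exact qW_partition hq0 hq1 n x

lemma qS_one (hq0 : 0 ≤ q) (hq1 : q < 1) {n : ℕ} (hn : 1 ≤ n) (x : ℝ) : qS q n 1 x = 0 := by
  rw [qS]
  have : ∀ k ∈ Finset.range (n+1),
      (∏ s ∈ Finset.range 1, (pqNode 1 q n k - q ^ s * x)) * qW q n k x
      = pqNode 1 q n k * qW q n k x - x * qW q n k x := by
    intro k _
    simp only [Finset.prod_range_one, pow_zero, one_mul]
    ring
  rw [Finset.sum_congr rfl this, Finset.sum_sub_distrib, qW_linear hq0 hq1 n hn x,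
    ← Finset.mul_sum, qW_partition hq0 hq1 n x, mul_one, sub_self]

lemma qS_recurrence (hq0 : 0 ≤ q) (hq1 : q < 1) {n : ℕ} (hn : 1 ≤ n) (m : ℕ) (x : ℝ) :
    (1 - q) * pqInt 1 q n * qS q n (m+1) x
      = (1 - x) * (qT q n m x - qS q n m (q*x)) := by
  have hnne := (pqInt_one_pos hq0 hq1 hn).ne'
  have hshift : qS q n m (q*x) = ∑ k ∈ Finset.range (n + 1),
      (∏ s ∈ Finset.range m, (pqNode 1 q n k - q ^ (s+1) * x)) * qW q n k (q*x) := by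
    rw [qS]
    apply Finset.sum_congr rfl
    intro k _
    congr 1
    apply Finset.prod_congr rfl
    intro s _
    rw [pow_succ]
    ring
  rw [hshift, qT, ← Finset.sum_sub_distrib, Finset.mul_sum, qS, Finset.mul_sum]
  refine Finset.sum_congr rfl fun k hk => ?_
  rw [Finset.mem_range] at hk
  have hkn : k ≤ n := by omega
  have hnode : pqInt 1 q k = pqInt 1 q n * pqNode 1 q n k := by
    rw [pqNode, one_pow, one_mul]
    field_simp
  have lad := qW_ladder hq0 hq1 hkn x
  have pstep : (pqNode 1 q n k - x) * ∏ s ∈ Finset.range m, (pqNode 1 q n k - q^(s+1)*x)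
      = ∏ s ∈ Finset.range (m+1), (pqNode 1 q n k - q^s*x) := by
    rw [Finset.prod_range_succ' (fun s => (pqNode 1 q n k - q^s*x)) m]
    rw [pow_zero]
    ring
  linear_combination (-(∏ s ∈ Finset.range m, (pqNode 1 q n k - q^(s+1)*x))) * lad
    + (-(1-q) * qW q n k x * (∏ s ∈ Finset.range m, (pqNode 1 q n k - q^(s+1)*x))) * hnode
    + (-(1-q) * pqInt 1 q n * qW q n k x) * pstep

end QBern
section GExp
variable {q : ℝ}

/-- Expansion coefficients for shifted q-products. -/
noncomputable def gq (q : ℝ) : ℕ → ℕ → ℝ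
  | 0 => fun j => if j = 0 then 1 else 0
  | (l+1) => fun j => (if j = 0 then 0 else gq q l (j-1)) + (q^j - q^(l+1)) * gq q l j

lemma gq_eq_zero : ∀ l j : ℕ, l < j → gq q l j = 0 := by
  intro l
  induction l with
  | zero => intro j hj; simp [gq]; omega
  | succ l ih =>
    intro j hj
    simp only [gq]
    have h1 : (if j = 0 then (0:ℝ) else gq q l (j-1)) = 0 := by
      have : j ≠ 0 := by omega
      rw [if_neg this]
      exact ih (j-1) (by omega)
    rw [h1, ih j (by omega)]
    ring

lemma gq_diag : ∀ l : ℕ, gq q l l = 1 := by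
  intro l
  induction l with
  | zero => simp [gq]
  | succ l ih =>
    simp only [gq]
    rw [if_neg (Nat.succ_ne_zero l), Nat.add_sub_cancel, ih,
      gq_eq_zero l (l+1) (Nat.lt_succ_self l)]
    ring

lemma one_sub_pow_le' (hq0 : 0 ≤ q) (hq1 : q ≤ 1) (d : ℕ) : 1 - q^d ≤ d * (1-q) := by
  induction d with
  | zero => simp
  | succ d ih =>
    have hqd : q^d ≤ 1 := pow_le_one₀ hq0 hq1
    have : 1 - q^(d+1) = (1-q) + q * (1 - q^d) := by ring
    rw [this]
    have h2 : q * (1 - q^d) ≤ 1 - q^d := by nlinarith [pow_nonneg hq0 d]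
    push_cast
    nlinarith

lemma gq_bound (hq0 : 0 ≤ q) (hq1 : q ≤ 1) :
    ∀ l j : ℕ, j ≤ l → |gq q l j| ≤ (1-q)^(l-j) * (Nat.factorial (l+1) : ℝ) := by
  intro l
  induction l with
  | zero =>
    intro j hj
    interval_cases j
    simp [gq, Nat.factorial]
  | succ l ih =>
    intro j hj
    have hfact_mono : (Nat.factorial (l+1) : ℝ) ≤ (Nat.factorial (l+2) : ℝ) := by
      exact_mod_cast Nat.factorial_le (by omega)
    have h1q : (0:ℝ) ≤ 1 - q := by linarith
    have hqd : ∀ d : ℕ, |q^j - q^(l+1)| ≤ (l+1) * (1-q) := by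
      intro _
      have hj1 : j ≤ l + 1 := hj
      have e : q^(l+1) = q^j * q^(l+1-j) := by rw [← pow_add]; congr 1; omega
      have h0 : (0:ℝ) ≤ q^j := pow_nonneg hq0 j
      have h2 : q^j - q^(l+1) = q^j * (1 - q^(l+1-j)) := by rw [e]; ring
      rw [h2, abs_of_nonneg (by nlinarith [pow_le_one₀ hq0 hq1 (n := l+1-j)])]
      have h3 := one_sub_pow_le' hq0 hq1 (l+1-j)
      have h4 : q^j * (1 - q^(l+1-j)) ≤ 1 - q^(l+1-j) := by
        nlinarith [pow_le_one₀ hq0 hq1 (n := j), pow_le_one₀ hq0 hq1 (n := l+1-j)]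
      have h5 : ((l+1-j : ℕ) : ℝ) ≤ ((l+1 : ℕ) : ℝ) := by exact_mod_cast Nat.sub_le (l+1) j
      calc q^j * (1 - q^(l+1-j)) ≤ ((l+1-j : ℕ) : ℝ) * (1-q) := le_trans h4 h3
        _ ≤ (l+1) * (1-q) := by
            have := mul_le_mul_of_nonneg_right h5 h1q
            push_cast at this ⊢
            linarith
    by_cases hjl : j = l + 1
    · subst hjl
      rw [gq_diag (l+1), Nat.sub_self, pow_zero, one_mul, abs_one]
      exact_mod_cast Nat.one_le_iff_ne_zero.2 (Nat.factorial_ne_zero _)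
    · have hjle : j ≤ l := by omega
      rw [gq]
      have step1 : |(if j = 0 then (0:ℝ) else gq q l (j-1)) + (q^j - q^(l+1)) * gq q l j|
          ≤ |(if j = 0 then (0:ℝ) else gq q l (j-1))| + |q^j - q^(l+1)| * |gq q l j| := by
        rw [← abs_mul]
        exact abs_add_le _ _
      refine le_trans step1 ?_
      have hB : |q^j - q^(l+1)| * |gq q l j| ≤ ((l+1) * (1-q)) * ((1-q)^(l-j) * (Nat.factorial (l+1) : ℝ)) := by
        apply mul_le_mul (hqd 0) (ih j hjle) (abs_nonneg _)
        positivity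
      have hA : |(if j = 0 then (0:ℝ) else gq q l (j-1))|
          ≤ (1-q)^(l+1-j) * (Nat.factorial (l+1) : ℝ) := by
        by_cases hj0 : j = 0
        · rw [if_pos hj0, abs_zero]; positivity
        · rw [if_neg hj0]
          have := ih (j-1) (by omega)
          have e : l - (j-1) = l + 1 - j := by omega
          rw [e] at this
          exact this
      have hexp : (1:ℝ) * ((1-q)^(l-j) * (1-q)) = (1-q)^(l+1-j) := by
        rw [one_mul, ← pow_succ]
        congr 1
        omega
      have hfac : (Nat.factorial (l+2) : ℝ) = (l+2) * (Nat.factorial (l+1) : ℝ) := by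
        rw [Nat.factorial_succ]
        push_cast
        ring
      rw [hfac]
      have key : (1-q)^(l+1-j) * (Nat.factorial (l+1) : ℝ)
            + ((l+1) * (1-q)) * ((1-q)^(l-j) * (Nat.factorial (l+1) : ℝ))
          ≤ (1-q)^(l+1-j) * ((l+2) * (Nat.factorial (l+1) : ℝ)) := by
        have e2 : (1-q) * (1-q)^(l-j) = (1-q)^(l+1-j) := by
          rw [← pow_succ']
          congr 1
          omega
        have hfnn : (0:ℝ) ≤ (Nat.factorial (l+1) : ℝ) := by positivity
        have hpow_le : (1-q)^(l+1-j) ≤ (1-q)^(l-j) := by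
          apply pow_le_pow_of_le_one h1q (by linarith)
          omega
        nlinarith [pow_nonneg h1q (l-j), pow_nonneg h1q (l+1-j)]
      calc _ ≤ (1-q)^(l+1-j) * (Nat.factorial (l+1) : ℝ)
            + ((l+1) * (1-q)) * ((1-q)^(l-j) * (Nat.factorial (l+1) : ℝ)) := by
            exact add_le_add hA hB
        _ ≤ _ := key

lemma gq_expand (l : ℕ) (t x : ℝ) :
    ∏ s ∈ Finset.range l, (t - q^(s+1)*x)
      = ∑ j ∈ Finset.range (l+1), gq q l j * x^(l-j) * ∏ s ∈ Finset.range j, (t - q^s*x) := by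
  induction l with
  | zero => simp [gq]
  | succ l ih =>
    rw [Finset.prod_range_succ, ih, Finset.sum_mul]
    have term : ∀ j ∈ Finset.range (l+1),
        gq q l j * x^(l-j) * (∏ s ∈ Finset.range j, (t - q^s*x)) * (t - q^(l+1)*x)
        = gq q l j * x^(l-j) * (∏ s ∈ Finset.range (j+1), (t - q^s*x))
          + gq q l j * (q^j - q^(l+1)) * x^(l+1-j) * ∏ s ∈ Finset.range j, (t - q^s*x) := by
      intro j hj
      rw [Finset.mem_range] at hj
      have hx : x^(l+1-j) = x^(l-j) * x := by
        rw [← pow_succ]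
        congr 1
        omega
      rw [Finset.prod_range_succ, hx]
      ring
    rw [Finset.sum_congr rfl term, Finset.sum_add_distrib]
    -- match with RHS
    rw [Finset.sum_range_succ
      (fun j => gq q (l+1) j * x^(l+1-j) * ∏ s ∈ Finset.range j, (t - q^s*x)) (l+1)]
    have top : gq q (l+1) (l+1) * x^(l+1-(l+1)) * ∏ s ∈ Finset.range (l+1), (t - q^s*x)
        = gq q l l * x^(l-l) * ∏ s ∈ Finset.range (l+1), (t - q^s*x) := by
      rw [gq_diag, gq_diag]
      simp
    rw [top]
    rw [Finset.sum_range_succ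
      (fun j => gq q l j * x^(l-j) * ∏ s ∈ Finset.range (j+1), (t - q^s*x)) l]
    have hsplit : ∀ j ∈ Finset.range (l+1),
        gq q (l+1) j * x^(l+1-j) * ∏ s ∈ Finset.range j, (t - q^s*x)
        = (if j = 0 then (0:ℝ) else gq q l (j-1)) * x^(l+1-j) * (∏ s ∈ Finset.range j, (t - q^s*x))
          + gq q l j * (q^j - q^(l+1)) * x^(l+1-j) * ∏ s ∈ Finset.range j, (t - q^s*x) := by
      intro j _
      simp only [gq]
      ring
    rw [Finset.sum_congr rfl hsplit, Finset.sum_add_distrib]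
    have hfirst : ∑ j ∈ Finset.range (l+1),
        (if j = 0 then (0:ℝ) else gq q l (j-1)) * x^(l+1-j) * (∏ s ∈ Finset.range j, (t - q^s*x))
        = ∑ j ∈ Finset.range l, gq q l j * x^(l-j) * ∏ s ∈ Finset.range (j+1), (t - q^s*x) := by
      rw [Finset.sum_range_succ' (fun j =>
        (if j = 0 then (0:ℝ) else gq q l (j-1)) * x^(l+1-j) * (∏ s ∈ Finset.range j, (t - q^s*x))) l]
      have f0 : (if (0:ℕ) = 0 then (0:ℝ) else gq q l (0-1)) * x^(l+1-0)
          * (∏ s ∈ Finset.range 0, (t - q^s*x)) = 0 := by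
        simp
      rw [f0, add_zero]
      refine Finset.sum_congr rfl fun j hj => ?_
      rw [Finset.mem_range] at hj
      have e : l + 1 - (j+1) = l - j := by omega
      rw [if_neg (Nat.succ_ne_zero j), Nat.add_sub_cancel, e]
    rw [hfirst]
    ring
end GExp

section TExp
variable {q : ℝ}

lemma qT_expand (n m : ℕ) (x : ℝ) :
    qT q n m x = ∑ j ∈ Finset.range (m+1), gq q m j * x^(m-j) * qS q n j x := by
  rw [qT]
  have term : ∀ k ∈ Finset.range (n+1),
      (∏ s ∈ Finset.range m, (pqNode 1 q n k - q^(s+1)*x)) * qW q n k x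
      = ∑ j ∈ Finset.range (m+1), gq q m j * x^(m-j)
          * ((∏ s ∈ Finset.range j, (pqNode 1 q n k - q^s*x)) * qW q n k x) := by
    intro k _
    rw [gq_expand m (pqNode 1 q n k) x, Finset.sum_mul]
    refine Finset.sum_congr rfl fun j _ => ?_
    ring
  rw [Finset.sum_congr rfl term, Finset.sum_comm]
  refine Finset.sum_congr rfl fun j _ => ?_
  rw [qS, Finset.mul_sum]

end TExp
section RepCalc

/-- `f` is a polynomial of degree `< D` with all coefficients bounded by `B`. -/
def PRep (f : ℝ → ℝ) (D : ℕ) (B : ℝ) : Prop :=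
  ∃ c : ℕ → ℝ, (∀ i, |c i| ≤ B) ∧ ∀ x : ℝ, f x = ∑ i ∈ Finset.range D, c i * x ^ i

lemma PRep.nonneg {f D B} (h : PRep f D B) : 0 ≤ B := by
  obtain ⟨c, hc, -⟩ := h
  exact le_trans (abs_nonneg _) (hc 0)

lemma PRep.congr {f g : ℝ → ℝ} {D B} (h : PRep f D B) (hfg : ∀ x, g x = f x) : PRep g D B := by
  obtain ⟨c, hc, he⟩ := h
  exact ⟨c, hc, fun x => (hfg x).trans (he x)⟩

lemma PRep.mono {f D B D' B'} (h : PRep f D B) (hD : D ≤ D') (hB : B ≤ B') : PRep f D' B' := by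
  have hBnn := h.nonneg
  obtain ⟨c, hc, he⟩ := h
  refine ⟨fun i => if i < D then c i else 0, fun i => ?_, fun x => ?_⟩
  · dsimp only
    by_cases hi : i < D
    · rw [if_pos hi]; exact le_trans (hc i) hB
    · rw [if_neg hi, abs_zero]; linarith
  · dsimp only
    rw [he x]
    have h2 : ∑ i ∈ Finset.range D, c i * x ^ i
        = ∑ i ∈ Finset.range D, (if i < D then c i else 0) * x ^ i := by
      refine Finset.sum_congr rfl fun i hi => ?_
      rw [Finset.mem_range] at hi
      rw [if_pos hi]
    rw [h2]
    refine Finset.sum_subset (Finset.range_subset_range.2 hD) fun i _ hi => ?_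
    rw [Finset.mem_range] at hi
    rw [if_neg (by omega), zero_mul]

lemma PRep.add {f g Df Dg Bf Bg} (hf : PRep f Df Bf) (hg : PRep g Dg Bg) :
    PRep (fun x => f x + g x) (max Df Dg) (Bf + Bg) := by
  obtain ⟨c, hc, he⟩ := (hf.mono (le_max_left Df Dg) le_rfl)
  obtain ⟨d, hd, hge⟩ := (hg.mono (le_max_right Df Dg) le_rfl)
  refine ⟨fun i => c i + d i, fun i => le_trans (abs_add_le _ _) (add_le_add (hc i) (hd i)),
    fun x => ?_⟩
  dsimp only
  rw [he x, hge x, ← Finset.sum_add_distrib]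
  refine Finset.sum_congr rfl fun i _ => ?_
  ring

lemma PRep.smul {f D B} (r : ℝ) (h : PRep f D B) : PRep (fun x => r * f x) D (|r| * B) := by
  obtain ⟨c, hc, he⟩ := h
  refine ⟨fun i => r * c i, fun i => ?_, fun x => ?_⟩
  · dsimp only
    rw [abs_mul]
    exact mul_le_mul_of_nonneg_left (hc i) (abs_nonneg r)
  · dsimp only
    rw [he x, Finset.mul_sum]
    refine Finset.sum_congr rfl fun i _ => ?_
    ring

lemma PRep.mulX1 {f D B} (h : PRep f D B) : PRep (fun x => x * f x) (D + 1) B := by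
  have hBnn := h.nonneg
  obtain ⟨c, hc, he⟩ := h
  refine ⟨fun i => if i = 0 then 0 else c (i - 1), fun i => ?_, fun x => ?_⟩
  · dsimp only
    by_cases hi : i = 0
    · rw [if_pos hi, abs_zero]; exact hBnn
    · rw [if_neg hi]; exact hc _
  · dsimp only
    rw [he x, Finset.mul_sum,
      Finset.sum_range_succ' (fun i => (if i = 0 then (0:ℝ) else c (i-1)) * x ^ i) D]
    have f0 : (if (0:ℕ) = 0 then (0:ℝ) else c (0-1)) * x ^ 0 = 0 := by norm_num
    rw [f0, add_zero]
    refine Finset.sum_congr rfl fun i _ => ?_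
    rw [if_neg (Nat.succ_ne_zero i), Nat.add_sub_cancel]
    ring

lemma PRep.mulX {f D B} (a : ℕ) (h : PRep f D B) : PRep (fun x => x ^ a * f x) (D + a) B := by
  induction a with
  | zero => exact h.congr fun x => by simp
  | succ a ih =>
    have h2 := ih.mulX1
    have h3 : PRep (fun x => x ^ (a+1) * f x) (D + a + 1) B :=
      h2.congr fun x => by rw [pow_succ]; ring
    exact h3.mono (by omega) le_rfl

lemma PRep.one_sub_mul {f D B} (h : PRep f D B) :
    PRep (fun x => (1 - x) * f x) (D + 1) (2 * B) := by
  have h1 := h.mono (Nat.le_succ D) le_rfl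
  have h2 : PRep (fun x => (-1 : ℝ) * (x * f x)) (D + 1) (|(-1:ℝ)| * B) := (h.mulX1).smul (-1)
  have h3 := h1.add h2
  have h4 := h3.congr (g := fun x => (1 - x) * f x) fun x => by ring
  refine h4.mono (le_of_eq ?_) (le_of_eq ?_)
  · omega
  · rw [abs_neg, abs_one]
    ring

lemma PRep.const (r : ℝ) : PRep (fun _ => r) 1 |r| :=
  ⟨fun _ => r, fun _ => le_rfl, fun x => by simp⟩

lemma PRep.zero (D : ℕ) : PRep (fun _ => (0:ℝ)) D 0 :=
  ⟨fun _ => 0, fun _ => by simp, fun x => by simp⟩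

lemma PRep.finsum {ι : Type*} (s : Finset ι) (f : ι → ℝ → ℝ) (D : ℕ) (B : ι → ℝ)
    (h : ∀ j ∈ s, PRep (f j) D (B j)) :
    PRep (fun x => ∑ j ∈ s, f j x) D (∑ j ∈ s, B j) := by
  induction s using Finset.cons_induction with
  | empty =>
    have h0 : PRep (fun x : ℝ => ∑ j ∈ (∅ : Finset ι), f j x) D 0 :=
      (PRep.zero D).congr (fun x => by simp)
    exact h0.mono le_rfl (le_of_eq (by simp))
  | cons a s ha ih =>
    have h1 := (h a (Finset.mem_cons_self a s)).add
      (ih fun j hj => h j (Finset.mem_cons.2 (Or.inr hj)))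
    have h2 := h1.congr (g := fun x => ∑ j ∈ Finset.cons a s ha, f j x)
      fun x => by rw [Finset.sum_cons]
    refine h2.mono (le_of_eq (max_self _)) (le_of_eq ?_)
    rw [Finset.sum_cons]

lemma PRep.comp_q {f D B} (q : ℝ) (hq : |q| ≤ 1) (h : PRep f D B) :
    PRep (fun x => f (q * x)) D B := by
  have hBnn := h.nonneg
  obtain ⟨c, hc, he⟩ := h
  refine ⟨fun i => c i * q ^ i, fun i => ?_, fun x => ?_⟩
  · dsimp only
    rw [abs_mul, abs_pow]
    calc |c i| * |q| ^ i ≤ B * 1 := by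
          apply mul_le_mul (hc i) (pow_le_one₀ (abs_nonneg q) hq) (by positivity) hBnn
      _ = B := mul_one B
  · dsimp only
    rw [he (q*x)]
    refine Finset.sum_congr rfl fun i _ => ?_
    rw [mul_pow]
    ring

lemma PRep.dq {f : ℝ → ℝ} {D : ℕ} {B : ℝ} {q : ℝ} (hq0 : 0 ≤ q) (hq1 : q < 1)
    (h : PRep f (D + 1) B) :
    ∃ g : ℝ → ℝ, (∀ x, f x - f (q * x) = (1 - q) * x * g x)
      ∧ PRep g D ((D + 1) * B) := by
  have hBnn := h.nonneg
  obtain ⟨c, hc, he⟩ := h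
  refine ⟨fun x => ∑ i ∈ Finset.range D,
    (if i < D then c (i+1) * pqInt 1 q (i+1) else 0) * x ^ i, fun x => ?_, ?_⟩
  · rw [he x, he (q*x), ← Finset.sum_sub_distrib, Finset.mul_sum,
      Finset.sum_range_succ' (fun i => c i * x ^ i - c i * (q*x) ^ i) D]
    simp only [pow_zero, mul_one, sub_self, add_zero]
    refine Finset.sum_congr rfl fun i hi => ?_
    rw [Finset.mem_range] at hi
    rw [if_pos hi]
    have key : (1-q) * pqInt 1 q (i+1) = 1 - q^(i+1) := one_sub_mul_pqInt hq1.ne (i+1)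
    rw [mul_pow]
    calc c (i+1) * x^(i+1) - c (i+1) * (q^(i+1) * x^(i+1))
        = c (i+1) * ((1 - q^(i+1)) * x^(i+1)) := by ring
      _ = c (i+1) * (((1-q) * pqInt 1 q (i+1)) * x^(i+1)) := by rw [key]
      _ = (1-q) * x * (c (i+1) * pqInt 1 q (i+1) * x^i) := by rw [pow_succ]; ring
  · refine ⟨fun i => if i < D then c (i+1) * pqInt 1 q (i+1) else 0, fun i => ?_, fun x => rfl⟩
    dsimp only
    by_cases hi : i < D
    · rw [if_pos hi, abs_mul]
      have hint_nn : 0 ≤ pqInt 1 q (i+1) := pqInt_one_nonneg hq0 hq1 (i+1)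
      have h1 : |pqInt 1 q (i+1)| ≤ ((D:ℝ) + 1) := by
        rw [abs_of_nonneg hint_nn]
        calc pqInt 1 q (i+1) ≤ ((i+1 : ℕ) : ℝ) := pqInt_one_le hq0 hq1.le (i+1)
          _ ≤ (D:ℝ) + 1 := by
            have : (i:ℝ) ≤ (D:ℝ) := by exact_mod_cast hi.le
            push_cast
            linarith
      have h2 : |c (i+1)| * |pqInt 1 q (i+1)| ≤ B * ((D:ℝ)+1) :=
        mul_le_mul (hc (i+1)) h1 (abs_nonneg _) hBnn
      push_cast
      linarith
    · rw [if_neg hi, abs_zero]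
      positivity

lemma PRep.eval_bound {f D B} (h : PRep f D B) {x : ℝ} (hx0 : 0 ≤ x) (hx1 : x ≤ 1) :
    |f x| ≤ D * B := by
  have hBnn := h.nonneg
  obtain ⟨c, hc, he⟩ := h
  rw [he x]
  calc |∑ i ∈ Finset.range D, c i * x ^ i| ≤ ∑ i ∈ Finset.range D, |c i * x ^ i| :=
        Finset.abs_sum_le_sum_abs _ _
    _ ≤ ∑ i ∈ Finset.range D, B := by
        refine Finset.sum_le_sum fun i _ => ?_
        rw [abs_mul, abs_pow]
        calc |c i| * |x| ^ i ≤ B * 1 := by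
              apply mul_le_mul (hc i) (pow_le_one₀ (abs_nonneg x) (by rwa [abs_of_nonneg hx0]))
                (by positivity) hBnn
          _ = B := mul_one B
    _ = D * B := by rw [Finset.sum_const, Finset.card_range, nsmul_eq_mul]

end RepCalc
section MainInduction

lemma qstep (M' : ℕ) (K : ℝ) (hK : 0 < K) :
    ∃ K' : ℝ, 0 < K' ∧ K ≤ K' ∧
    ∀ (n : ℕ), 1 ≤ n → ∀ q : ℝ, 0 < q → q < 1 →
    ∀ R : ℕ → ℝ → ℝ,
    (∀ j, 1 ≤ j → j ≤ M' + 1 →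
      (∀ x, qS q n j x = x * (1-x) * R j x)
        ∧ PRep (R j) j (K * ((pqInt 1 q n)⁻¹) ^ ((j+1)/2))) →
    ∃ R' : ℝ → ℝ, (∀ x, qS q n (M'+2) x = x * (1-x) * R' x)
      ∧ PRep R' (M'+2) (K' * ((pqInt 1 q n)⁻¹) ^ ((M'+3)/2)) := by
  set F : ℝ := (Nat.factorial (M'+2) : ℝ) with hF
  have hFpos : 0 < F := by rw [hF]; exact_mod_cast Nat.factorial_pos _
  refine ⟨2*(M'+3)*K + F + M'*(2*K*F) + K, by positivity, ?_, ?_⟩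
  · have h1 : (0:ℝ) ≤ 2*(M'+3)*K := by positivity
    have h2 : (0:ℝ) ≤ M'*(2*K*F) := by positivity
    linarith
  intro n hn q hq0 hq1 R hR
  set u : ℝ := (pqInt 1 q n)⁻¹ with hu
  have hnint : 0 < pqInt 1 q n := pqInt_one_pos hq0.le hq1 hn
  have hupos : 0 < u := by positivity
  have hnu : pqInt 1 q n * u = 1 := mul_inv_cancel₀ hnint.ne'
  have hule : u ≤ 1 := by
    rw [hu]
    have h1 := pqInt_one_ge_one hq0.le hq1 hn
    rw [inv_le_one_iff₀]
    right; linarith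
  have h1qpos : (0:ℝ) < 1 - q := by linarith
  have h1qu : 1 - q ≤ u := by
    have h1 := one_sub_mul_pqInt hq1.ne n
    have h2 : (0:ℝ) ≤ q ^ n := by positivity
    have h3 : (1-q) * pqInt 1 q n ≤ 1 := by linarith
    nlinarith
  have hupow : ∀ a b : ℕ, b ≤ a → u^a ≤ u^b :=
    fun a b hba => pow_le_pow_of_le_one hupos.le hule hba
  obtain ⟨hSM, hRM⟩ := hR (M'+1) (by omega) (by omega)
  set BM : ℝ := K * u ^ ((M'+2)/2) with hBM
  have hBMpos : 0 < BM := by positivity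
  -- build E via the q-difference of x(1-x)R_{M'+1}
  have hfrep : PRep (fun y => y * ((1-y) * R (M'+1) y)) ((M'+2) + 1) (2 * BM) := by
    have h1 := (hRM.one_sub_mul).mulX1
    exact h1.mono (by omega) le_rfl
  obtain ⟨E, hEeq, hErep⟩ := PRep.dq hq0.le hq1 hfrep
  set g0 : ℝ := gq q (M'+1) 0 with hg0def
  set h0 : ℝ := g0 / (1-q) with hh0def
  have hg0 : (1-q) * h0 = g0 := by
    rw [hh0def]; field_simp
  have hgt : ∀ t : ℕ, (1-q) * (gq q (M'+1) (t+1) / (1-q)) = gq q (M'+1) (t+1) := by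
    intro t; field_simp
  have hTx : ∀ x : ℝ, qT q n (M'+1) x
      = (∑ t ∈ Finset.range M', gq q (M'+1) (t+1) * x^(M'-t) * qS q n (t+1) x)
        + qS q n (M'+1) x + g0 * x^(M'+1) := by
    intro x
    rw [qT_expand n (M'+1) x,
      Finset.sum_range_succ' (fun j => gq q (M'+1) j * x^(M'+1-j) * qS q n j x) (M'+1),
      Finset.sum_range_succ (fun t => gq q (M'+1) (t+1) * x^(M'+1-(t+1)) * qS q n (t+1) x) M']
    rw [gq_diag, qS_zero hq0.le hq1]
    have e1 : M'+1-(M'+1) = 0 := by omega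
    rw [e1]
    have hcg : ∀ t ∈ Finset.range M',
        gq q (M'+1) (t+1) * x^(M'+1-(t+1)) * qS q n (t+1) x
        = gq q (M'+1) (t+1) * x^(M'-t) * qS q n (t+1) x := by
      intro t ht
      rw [Finset.mem_range] at ht
      have e : M'+1-(t+1) = M'-t := by omega
      rw [e]
    rw [Finset.sum_congr rfl hcg, Nat.sub_zero]
    ring
  have hdq : ∀ x : ℝ, qS q n (M'+1) x - qS q n (M'+1) (q*x) = (1-q) * x * E x := by
    intro x
    rw [hSM x, hSM (q*x), ← hEeq x]
    ring
  have hne : (1-q) * pqInt 1 q n ≠ 0 := by positivity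
  refine ⟨fun x => u * (E x + h0 * x^M'
    + ∑ t ∈ Finset.range M', (gq q (M'+1) (t+1) / (1-q)) * (x^(M'-t) * ((1-x) * R (t+1) x))),
    fun x => ?_, ?_⟩
  · -- the equality
    apply mul_left_cancel₀ hne
    have hrec : (1-q) * pqInt 1 q n * qS q n (M'+2) x
        = (1 - x) * (qT q n (M'+1) x - qS q n (M'+1) (q*x)) :=
      qS_recurrence hq0.le hq1 hn (M'+1) x
    rw [hrec, hTx x]
    have hsum : ∑ t ∈ Finset.range M', gq q (M'+1) (t+1) * x^(M'-t) * qS q n (t+1) x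
        = ∑ t ∈ Finset.range M', gq q (M'+1) (t+1) * (x^(M'-t) * (x*((1-x)* R (t+1) x))) := by
      refine Finset.sum_congr rfl fun t ht => ?_
      rw [Finset.mem_range] at ht
      rw [(hR (t+1) (by omega) (by omega)).1 x]
      ring
    rw [hsum]
    set SS : ℝ := ∑ t ∈ Finset.range M',
      (gq q (M'+1) (t+1) / (1-q)) * (x^(M'-t) * ((1-x) * R (t+1) x)) with hSSdef
    have hSS : (1-q) * (x * SS)
        = ∑ t ∈ Finset.range M', gq q (M'+1) (t+1) * (x^(M'-t) * (x*((1-x)* R (t+1) x))) := by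
      rw [hSSdef, Finset.mul_sum, Finset.mul_sum]
      refine Finset.sum_congr rfl fun t ht => ?_
      have h5 := hgt t
      linear_combination (x^(M'-t) * (x * ((1-x) * R (t+1) x))) * h5
    rw [← hSS]
    linear_combination (1-x) * hdq x + (-(1-x)*x^(M'+1)) * hg0
      + (-((1-q)*(x*(1-x)*(E x + h0*x^M' + SS)))) * hnu
  · -- the bound
    have P1 : PRep E (M'+2) (((M'+2) + 1 : ℝ) * (2 * BM)) := by
      have := hErep
      convert this using 2
      push_cast
      ring
    have P2 : PRep (fun x : ℝ => h0 * x^M') (M'+1) (|h0| * |(1:ℝ)|) := by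
      have p := ((PRep.const 1).mulX M').smul h0
      refine (p.congr fun x => by ring).mono (by omega) le_rfl
    have P3 : PRep (fun x : ℝ => ∑ t ∈ Finset.range M',
        (gq q (M'+1) (t+1) / (1-q)) * (x^(M'-t) * ((1-x) * R (t+1) x))) (M'+2)
        (∑ t ∈ Finset.range M',
          |gq q (M'+1) (t+1) / (1-q)| * (2 * (K * u ^ ((t+2)/2)))) := by
      refine PRep.finsum (Finset.range M') _ (M'+2) _ fun t ht => ?_
      rw [Finset.mem_range] at ht
      have base := (hR (t+1) (by omega) (by omega)).2
      have p := ((base.one_sub_mul).mulX (M'-t)).smul (gq q (M'+1) (t+1) / (1-q))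
      refine p.mono (by omega) (le_of_eq ?_)
      ring
    -- assemble
    have P12 := P1.add (P2.mono (by omega : M'+1 ≤ M'+2) le_rfl)
    have P123 := P12.add P3
    have Pfin := P123.smul u
    have hfun : ∀ x : ℝ, u * (E x + h0 * x^M'
        + ∑ t ∈ Finset.range M', (gq q (M'+1) (t+1) / (1-q)) * (x^(M'-t) * ((1-x) * R (t+1) x)))
        = u * ((E x + h0 * x^M')
        + ∑ t ∈ Finset.range M', (gq q (M'+1) (t+1) / (1-q)) * (x^(M'-t) * ((1-x) * R (t+1) x))) := by
      intro x; ring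
    refine ((Pfin.congr fun x => by rw [hfun x]).mono (by omega) ?_)
    -- final numeric bound
    have habs_u : |u| = u := abs_of_pos hupos
    rw [habs_u]
    have hh0b : |h0| ≤ u^M' * F := by
      have hgb := gq_bound hq0.le hq1.le (M'+1) 0 (by omega)
      rw [Nat.sub_zero] at hgb
      rw [hh0def, abs_div, abs_of_pos h1qpos, div_le_iff₀ h1qpos]
      calc |g0| ≤ (1-q)^(M'+1) * F := hgb
        _ = ((1-q)^M' * (1-q)) * F := by rw [pow_succ]
        _ ≤ (u^M' * (1-q)) * F := by
            exact mul_le_mul_of_nonneg_right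
              (mul_le_mul_of_nonneg_right (pow_le_pow_left₀ h1qpos.le h1qu M') h1qpos.le) hFpos.le
        _ = u^M' * F * (1-q) := by ring
    have hhtb : ∀ t : ℕ, t < M' → |gq q (M'+1) (t+1) / (1-q)| ≤ u^(M'-t-1) * F := by
      intro t ht
      have hgb := gq_bound hq0.le hq1.le (M'+1) (t+1) (by omega)
      have e : M'+1-(t+1) = M'-t := by omega
      rw [e] at hgb
      rw [abs_div, abs_of_pos h1qpos, div_le_iff₀ h1qpos]
      calc |gq q (M'+1) (t+1)| ≤ (1-q)^(M'-t) * F := hgb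
        _ = ((1-q)^(M'-t-1) * (1-q)) * F := by
            have e2 : (1-q)^(M'-t) = (1-q)^(M'-t-1) * (1-q) := by
              rw [← pow_succ]
              congr 1
              omega
            rw [e2]
        _ ≤ (u^(M'-t-1) * (1-q)) * F := by
            exact mul_le_mul_of_nonneg_right
              (mul_le_mul_of_nonneg_right (pow_le_pow_left₀ h1qpos.le h1qu (M'-t-1)) h1qpos.le)
              hFpos.le
        _ = u^(M'-t-1) * F * (1-q) := by ring
    -- bound the three pieces after multiplying by u
    have hB1 : u * (((M'+2) + 1 : ℝ) * (2 * BM)) ≤ 2*(M'+3)*K * u^((M'+3)/2) := by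
      rw [hBM]
      have h1 : u * (((M'+2) + 1 : ℝ) * (2 * (K * u^((M'+2)/2))))
          = (2*(M'+3)*K) * (u * u^((M'+2)/2)) := by push_cast; ring
      rw [h1, ← pow_succ']
      apply mul_le_mul_of_nonneg_left (hupow _ _ (by omega)) (by positivity)
    have hB2 : u * (|h0| * |(1:ℝ)|) ≤ F * u^((M'+3)/2) := by
      rw [abs_one, mul_one]
      calc u * |h0| ≤ u * (u^M' * F) := by
            apply mul_le_mul_of_nonneg_left hh0b hupos.le
        _ = F * (u * u^M') := by ring
        _ = F * u^(M'+1) := by rw [← pow_succ']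
        _ ≤ F * u^((M'+3)/2) := by
            apply mul_le_mul_of_nonneg_left (hupow _ _ (by omega)) hFpos.le
    have hB3 : u * (∑ t ∈ Finset.range M',
        |gq q (M'+1) (t+1) / (1-q)| * (2 * (K * u ^ ((t+2)/2))))
        ≤ M'*(2*K*F) * u^((M'+3)/2) := by
      rw [Finset.mul_sum]
      have hterm : ∀ t ∈ Finset.range M',
          u * (|gq q (M'+1) (t+1) / (1-q)| * (2 * (K * u ^ ((t+2)/2))))
          ≤ (2*K*F) * u^((M'+3)/2) := by
        intro t ht
        rw [Finset.mem_range] at ht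
        calc u * (|gq q (M'+1) (t+1) / (1-q)| * (2 * (K * u ^ ((t+2)/2))))
            ≤ u * ((u^(M'-t-1) * F) * (2 * (K * u ^ ((t+2)/2)))) := by
              apply mul_le_mul_of_nonneg_left ?_ hupos.le
              apply mul_le_mul_of_nonneg_right (hhtb t ht) (by positivity)
          _ = (2*K*F) * (u * (u^(M'-t-1) * u^((t+2)/2))) := by ring
          _ = (2*K*F) * u^((M'-t-1) + (t+2)/2 + 1) := by
              rw [← pow_add, ← pow_succ']
          _ ≤ (2*K*F) * u^((M'+3)/2) := by
              apply mul_le_mul_of_nonneg_left (hupow _ _ (by omega)) (by positivity)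
      calc ∑ t ∈ Finset.range M',
            u * (|gq q (M'+1) (t+1) / (1-q)| * (2 * (K * u ^ ((t+2)/2))))
          ≤ ∑ t ∈ Finset.range M', (2*K*F) * u^((M'+3)/2) := Finset.sum_le_sum hterm
        _ = M' * ((2*K*F) * u^((M'+3)/2)) := by
            rw [Finset.sum_const, Finset.card_range, nsmul_eq_mul]
        _ = M'*(2*K*F) * u^((M'+3)/2) := by ring
    calc u * ((((M'+2) + 1 : ℝ) * (2 * BM)) + (|h0| * |(1:ℝ)|)
          + ∑ t ∈ Finset.range M',
            |gq q (M'+1) (t+1) / (1-q)| * (2 * (K * u ^ ((t+2)/2))))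
        = u * (((M'+2) + 1 : ℝ) * (2 * BM)) + u * (|h0| * |(1:ℝ)|)
          + u * (∑ t ∈ Finset.range M',
            |gq q (M'+1) (t+1) / (1-q)| * (2 * (K * u ^ ((t+2)/2)))) := by ring
      _ ≤ 2*(M'+3)*K * u^((M'+3)/2) + F * u^((M'+3)/2) + M'*(2*K*F) * u^((M'+3)/2) :=
          add_le_add (add_le_add hB1 hB2) hB3
      _ ≤ (2*(M'+3)*K + F + M'*(2*K*F) + K) * u^((M'+3)/2) := by
          have : (0:ℝ) ≤ K * u^((M'+3)/2) := by positivity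
          nlinarith [pow_nonneg hupos.le ((M'+3)/2)]

end MainInduction
section Assemble

lemma qmain (M : ℕ) : ∃ K : ℝ, 0 < K ∧
    ∀ (n : ℕ), 1 ≤ n → ∀ q : ℝ, 0 < q → q < 1 →
    ∃ R : ℕ → ℝ → ℝ, ∀ j, 1 ≤ j → j ≤ M →
      (∀ x, qS q n j x = x * (1-x) * R j x)
        ∧ PRep (R j) j (K * ((pqInt 1 q n)⁻¹) ^ ((j+1)/2)) := by
  induction M with
  | zero =>
    exact ⟨1, one_pos, fun n hn q h0 h1 =>
      ⟨fun _ _ => 0, fun j hj1 hj2 => absurd (le_trans hj1 hj2) (by omega)⟩⟩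
  | succ M ih =>
    obtain ⟨K, hK, hIH⟩ := ih
    cases M with
    | zero =>
      refine ⟨K, hK, fun n hn q hq0 hq1 => ⟨fun _ _ => 0, fun j hj1 hj2 => ?_⟩⟩
      have hj : j = 1 := by omega
      subst hj
      constructor
      · intro x
        rw [qS_one hq0.le hq1 hn x]
        ring
      · refine (PRep.zero 1).mono le_rfl ?_
        have := pqInt_one_pos hq0.le hq1 hn
        positivity
    | succ M' =>
      obtain ⟨K', hK', hKK', hstep⟩ := qstep M' K hK
      refine ⟨K', hK', fun n hn q hq0 hq1 => ?_⟩
      obtain ⟨R, hR⟩ := hIH n hn q hq0 hq1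
      obtain ⟨R', hR'eq, hR'rep⟩ := hstep n hn q hq0 hq1 R hR
      refine ⟨fun j => if j = M'+2 then R' else R j, fun j hj1 hj2 => ?_⟩
      dsimp only
      by_cases hje : j = M'+2
      · subst hje
        rw [if_pos rfl]
        exact ⟨hR'eq, hR'rep⟩
      · rw [if_neg hje]
        obtain ⟨he, hrep⟩ := hR j hj1 (by omega)
        refine ⟨he, hrep.mono le_rfl ?_⟩
        have : (0:ℝ) ≤ ((pqInt 1 q n)⁻¹) ^ ((j+1)/2) := by
          have := pqInt_one_pos hq0.le hq1 hn
          positivity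
        nlinarith


lemma qcase (m : ℕ) (hm : 1 ≤ m) : ∃ C : ℝ, 0 < C ∧
    ∀ (n : ℕ), 1 ≤ n → ∀ q : ℝ, 0 < q → q < 1 →
    ∀ x : ℝ, 0 ≤ x → x ≤ 1 →
      |qS q n m x| ≤ C * (x * (1-x) * ((pqInt 1 q n)⁻¹) ^ ((m+1)/2)) := by
  obtain ⟨K, hK, h⟩ := qmain m
  refine ⟨m*K + 1, by positivity, fun n hn q hq0 hq1 x hx0 hx1 => ?_⟩
  obtain ⟨R, hR⟩ := h n hn q hq0 hq1
  obtain ⟨heq, hrep⟩ := hR m hm le_rfl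
  have hu : (0:ℝ) < (pqInt 1 q n)⁻¹ := by
    have := pqInt_one_pos hq0.le hq1 hn
    positivity
  have hRb := hrep.eval_bound hx0 hx1
  rw [heq x]
  have h1 : |x * (1-x) * R m x| = x * (1-x) * |R m x| := by
    rw [abs_mul, abs_mul, abs_of_nonneg hx0, abs_of_nonneg (by linarith : (0:ℝ) ≤ 1 - x)]
  rw [h1]
  have h2 : x * (1-x) * |R m x| ≤ x * (1-x) * (m * (K * ((pqInt 1 q n)⁻¹) ^ ((m+1)/2))) := by
    apply mul_le_mul_of_nonneg_left hRb
    nlinarith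
  calc x * (1-x) * |R m x| ≤ x * (1-x) * (m * (K * ((pqInt 1 q n)⁻¹) ^ ((m+1)/2))) := h2
    _ ≤ (m*K + 1) * (x * (1-x) * ((pqInt 1 q n)⁻¹) ^ ((m+1)/2)) := by
        have hpw : (0:ℝ) ≤ ((pqInt 1 q n)⁻¹) ^ ((m+1)/2) := by positivity
        nlinarith [mul_nonneg (mul_nonneg hx0 (by linarith : (0:ℝ) ≤ 1-x)) hpw]

-- reduction (p,q) → (1, q/p)

lemma pqInt_scale {p q : ℝ} (hp : 0 < p) (hqp : q < p) (k : ℕ) :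
    pqInt p q k = p^(k-1) * pqInt 1 (q/p) k := by
  cases k with
  | zero => simp [pqInt]
  | succ k =>
    rw [pqInt, pqInt, one_pow, div_pow, Nat.add_sub_cancel]
    have hpne : p ≠ 0 := hp.ne'
    have h1 : p - q ≠ 0 := by intro h; nlinarith
    have h2 : 1 - q / p ≠ 0 := by
      intro h
      apply h1
      field_simp at h
      nlinarith [h]
    field_simp
    ring

lemma pqFact_scale {p q : ℝ} (hp : 0 < p) (hqp : q < p) (k : ℕ) :
    pqFact p q k = p^(k*(k-1)/2) * pqFact 1 (q/p) k := by
  induction k with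
  | zero => simp [pqFact_zero]
  | succ k ih =>
    rw [pqFact_succ, pqFact_succ, ih, pqInt_scale hp hqp (k+1), Nat.add_sub_cancel]
    have e : (k+1)*k/2 = k*(k-1)/2 + k := by
      have e2 := Finset.sum_range_succ (fun i => i) k
      rw [Finset.sum_range_id, Finset.sum_range_id] at e2
      simpa using e2
    rw [e, pow_add]
    ring

lemma prod_p_pow (p : ℝ) (j : ℕ) : ∏ s ∈ Finset.range j, p^s = p^(j*(j-1)/2) := by
  rw [Finset.prod_pow_eq_pow_sum, Finset.sum_range_id]

lemma pqBern_scale {p q : ℝ} (hp : 0 < p) (hq0 : 0 < q) (hqp : q < p) (hp1 : p ≤ 1)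
    {n k : ℕ} (hk : k ≤ n) (x : ℝ) :
    pqBern p q n k x = p^(n*(n-1)/2) * qW (q/p) n k x := by
  have hq'0 : 0 < q/p := by positivity
  have hq'1 : q/p < 1 := (div_lt_one hp).2 hqp
  have hprod : ∏ s ∈ Finset.range (n-k), (p^s - q^s * x)
      = p^((n-k)*(n-k-1)/2) * ∏ s ∈ Finset.range (n-k), (1 - (q/p)^s * x) := by
    rw [← prod_p_pow p (n-k), ← Finset.prod_mul_distrib]
    refine Finset.prod_congr rfl fun s _ => ?_
    rw [div_pow]
    field_simp
  have hbinom : pqBinom p q n k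
      = p^(n*(n-1)/2) / (p^(k*(k-1)/2) * p^((n-k)*(n-k-1)/2)) * pqBinom 1 (q/p) n k := by
    rw [pqBinom, pqBinom, pqFact_scale hp hqp n, pqFact_scale hp hqp k, pqFact_scale hp hqp (n-k)]
    have f1 := (pqFact_one_pos hq'0.le hq'1 k).ne'
    have f2 := (pqFact_one_pos hq'0.le hq'1 (n-k)).ne'
    have hpne : (p:ℝ) ≠ 0 := hp.ne'
    rw [div_mul_eq_mul_div, eq_div_iff (by positivity : (p^(k*(k-1)/2) * p^((n-k)*(n-k-1)/2) : ℝ) ≠ 0)]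
    field_simp
  rw [pqBern, qW, hprod, hbinom]
  have hpne : (p:ℝ) ≠ 0 := hp.ne'
  field_simp
  ring

lemma pqNode_scale {p q : ℝ} (hp : 0 < p) (hq0 : 0 < q) (hqp : q < p)
    {n k : ℕ} (hk : k ≤ n) (hn : 1 ≤ n) :
    pqNode p q n k = pqNode 1 (q/p) n k := by
  have hq'0 : 0 < q/p := by positivity
  have hq'1 : q/p < 1 := (div_lt_one hp).2 hqp
  cases k with
  | zero =>
    rw [pqNode, pqNode, pqInt, pqInt]
    norm_num
    rw [pqInt]
    norm_num
  | succ k =>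
    rw [pqNode, pqNode, pqInt_scale hp hqp (k+1), pqInt_scale hp hqp n, one_pow, one_mul,
      Nat.add_sub_cancel]
    have hn' : 0 < pqInt 1 (q/p) n := pqInt_one_pos hq'0.le hq'1 hn
    have hpne : (p:ℝ) ≠ 0 := hp.ne'
    rw [div_eq_div_iff (by positivity) hn'.ne']
    have e : p^(n-(k+1)) * p^k = p^(n-1) := by
      rw [← pow_add]
      congr 1
      omega
    calc p ^ (n - (k+1)) * (p ^ k * pqInt 1 (q/p) (k+1)) * pqInt 1 (q/p) n
        = (p^(n-(k+1)) * p^k) * pqInt 1 (q/p) (k+1) * pqInt 1 (q/p) n := by ring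
      _ = p^(n-1) * pqInt 1 (q/p) (k+1) * pqInt 1 (q/p) n := by rw [e]
      _ = pqInt 1 (q/p) (k+1) * (p^(n-1) * pqInt 1 (q/p) n) := by ring

lemma pqPowMoment_scale {p q : ℝ} (hp : 0 < p) (hq0 : 0 < q) (hqp : q < p) (hp1 : p ≤ 1)
    {n : ℕ} (hn : 1 ≤ n) (m : ℕ) (x : ℝ) :
    pqPowMoment p q n m x x = p^(m*(m-1)/2) * qS (q/p) n m x := by
  rw [pqPowMoment, qS, Finset.mul_sum, Finset.mul_sum]
  have hpne : (p:ℝ) ≠ 0 := hp.ne'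
  have hN : (p ^ (n * (n - 1) / 2) : ℝ) ≠ 0 := by positivity
  refine Finset.sum_congr rfl fun k hk => ?_
  rw [Finset.mem_range] at hk
  have hkn : k ≤ n := by omega
  have hprod : ∏ s ∈ Finset.range m, (p^s * pqNode p q n k - q^s * x)
      = p^(m*(m-1)/2) * ∏ s ∈ Finset.range m, (pqNode 1 (q/p) n k - (q/p)^s * x) := by
    rw [← prod_p_pow p m, ← Finset.prod_mul_distrib]
    refine Finset.prod_congr rfl fun s _ => ?_
    rw [pqNode_scale hp hq0 hqp hkn hn, div_pow]
    field_simp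
  rw [hprod, pqBern_scale hp hq0 hqp hp1 hkn x]
  field_simp
  ring

end Assemble
/-- `|B_{n,p,q}((t-x)^m_{p,q};x)| ≤ C_m x(1-x)/[n]^⌊(m+1)/2⌋`. -/
theorem pq_powMoment_bound (m : ℕ) (hm : 1 ≤ m) :
    ∃ C : ℝ, 0 < C ∧
      ∀ (n : ℕ), 1 ≤ n → ∀ p q : ℝ, 0 < q → q < p → p ≤ 1 →
        ∀ x ∈ Set.Icc (0 : ℝ) 1,
          |pqPowMoment p q n m x x| ≤ C * (x * (1 - x) / pqInt p q n ^ ((m + 1) / 2)) := by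
  obtain ⟨C, hC, h⟩ := qcase m hm
  refine ⟨C, hC, fun n hn p q hq0 hqp hp1 x hx => ?_⟩
  obtain ⟨hx0, hx1⟩ := hx
  have hp : 0 < p := lt_trans hq0 hqp
  have hq'0 : 0 < q/p := by positivity
  have hq'1 : q/p < 1 := (div_lt_one hp).2 hqp
  have hmom := pqPowMoment_scale hp hq0 hqp hp1 hn m x
  have hqS := h n hn (q/p) hq'0 hq'1 x hx0 hx1
  have hint' : 0 < pqInt 1 (q/p) n := pqInt_one_pos hq'0.le hq'1 hn
  have hint : 0 < pqInt p q n := by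
    rw [pqInt_scale hp hqp n]
    positivity
  rw [hmom, abs_mul, abs_of_nonneg (by positivity : (0:ℝ) ≤ p^(m*(m-1)/2))]
  have hple : p^(m*(m-1)/2) ≤ 1 := pow_le_one₀ hp.le hp1
  have hmono : pqInt p q n ≤ pqInt 1 (q/p) n := by
    rw [pqInt_scale hp hqp n]
    nlinarith [pow_le_one₀ hp.le hp1 (n := n-1), hint'.le,
      pow_nonneg hp.le (n-1)]
  have hinv : (pqInt 1 (q/p) n)⁻¹ ≤ (pqInt p q n)⁻¹ := by
    exact inv_anti₀ hint hmono
  have hpow : ((pqInt 1 (q/p) n)⁻¹)^((m+1)/2) ≤ ((pqInt p q n)⁻¹)^((m+1)/2) :=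
    pow_le_pow_left₀ (by positivity) hinv _
  have habs : |qS (q/p) n m x| ≥ 0 := abs_nonneg _
  have hxx : (0:ℝ) ≤ x * (1-x) := mul_nonneg hx0 (by linarith)
  calc p^(m*(m-1)/2) * |qS (q/p) n m x| ≤ 1 * |qS (q/p) n m x| := by nlinarith
    _ = |qS (q/p) n m x| := one_mul _
    _ ≤ C * (x * (1-x) * ((pqInt 1 (q/p) n)⁻¹) ^ ((m+1)/2)) := hqS
    _ ≤ C * (x * (1-x) * ((pqInt p q n)⁻¹) ^ ((m+1)/2)) := by
        apply mul_le_mul_of_nonneg_left ?_ hC.le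
        exact mul_le_mul_of_nonneg_left hpow hxx
    _ = C * (x * (1-x) / pqInt p q n ^ ((m+1)/2)) := by
        rw [div_eq_mul_inv, inv_pow]
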